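/- Let µ ≠ 0 and h > 0. Define p₊ = (µh − sinh(µh)e^{−µh})/(2sinh²(µh)) and p₋ = (−µh + sinh(µh)e^{µh})/(2sinh²(µh)). Then p₊ ∈ (0,1), p₋ ∈ (0,1), and p₊ + p₋ = 1. -/

import Mathlib

open Real

theorem stmt_18 (μ h : ℝ) (hμ : μ ≠ 0) (hh : 0 < h) :
    (μ * h - Real.sinh (μ * h) * Real.exp (-(μ * h))) / (2 * Real.sinh (μ * h) ^ 2)
        ∈ Set.Ioo (0 : ℝ) 1 ∧
    (-(μ * h) + Real.sinh (μ * h) * Real.exp (μ * h)) / (2 * Real.sinh (μ * h) ^ 2)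
        ∈ Set.Ioo (0 : ℝ) 1 ∧
    (μ * h - Real.sinh (μ * h) * Real.exp (-(μ * h))) / (2 * Real.sinh (μ * h) ^ 2)
        + (-(μ * h) + Real.sinh (μ * h) * Real.exp (μ * h)) / (2 * Real.sinh (μ * h) ^ 2)
      = 1 := by
  set x := μ * h with hxdef
  have hx0 : x ≠ 0 := mul_ne_zero hμ hh.ne'
  set a := Real.exp x with ha
  set b := Real.exp (-x) with hb
  have hab : a * b = 1 := by rw [ha, hb, ← Real.exp_add]; simp
  have hA : 2 * x + 1 < a ^ 2 := by
    have h1 : (2 * x) + 1 < Real.exp (2 * x) :=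
      Real.add_one_lt_exp (mul_ne_zero two_ne_zero hx0)
    have e : Real.exp (2 * x) = a ^ 2 := by rw [ha, two_mul, Real.exp_add]; ring
    linarith [e ▸ h1]
  have hB : -(2 * x) + 1 < b ^ 2 := by
    have h1 : (-(2 * x)) + 1 < Real.exp (-(2 * x)) :=
      Real.add_one_lt_exp (neg_ne_zero.mpr (mul_ne_zero two_ne_zero hx0))
    have e : Real.exp (-(2 * x)) = b ^ 2 := by
      rw [hb, show -(2 * x) = -x + -x by ring, Real.exp_add]; ring
    linarith [e ▸ h1]
  have hsinh : Real.sinh x = (a - b) / 2 := by rw [Real.sinh_eq, ha, hb]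
  have hsne : Real.sinh x ≠ 0 := by
    simp only [ne_eq, Real.sinh_eq_zero]; exact hx0
  have hd : 0 < 2 * Real.sinh x ^ 2 := by positivity
  have hn1 : 0 < x - Real.sinh x * b := by rw [hsinh]; nlinarith [hab]
  have hn2 : 0 < -x + Real.sinh x * a := by rw [hsinh]; nlinarith [hab]
  have hsum : (x - Real.sinh x * b) + (-x + Real.sinh x * a) = 2 * Real.sinh x ^ 2 := by
    rw [hsinh]; ring
  have hone : (x - Real.sinh x * b) / (2 * Real.sinh x ^ 2)
      + (-x + Real.sinh x * a) / (2 * Real.sinh x ^ 2) = 1 := by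
    rw [← add_div, hsum, div_self hd.ne']
  have hp1 : 0 < (x - Real.sinh x * b) / (2 * Real.sinh x ^ 2) := div_pos hn1 hd
  have hp2 : 0 < (-x + Real.sinh x * a) / (2 * Real.sinh x ^ 2) := div_pos hn2 hd
  exact ⟨⟨hp1, by linarith⟩, ⟨hp2, by linarith⟩, hone⟩
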